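/- Let 0 ≤ μ ≤ 2 and let C be any bivariate copula. Then μ·ψ(C) + ξ(C) ≥ μ·(−2v₁² + 6v₁ − 5 + 1/v₁) + (−4v₁² + 20v₁ − 17 + 2/v₁ − 1/v₁² − 12·ln(v₁)), where v₁ = 2/(2+μ). -/

import Mathlib

open MeasureTheory Set Filter Topology

noncomputable section

def IsCopula (C : ℝ → ℝ → ℝ) : Prop :=
  (∀ u ∈ Icc (0:ℝ) 1, ∀ v ∈ Icc (0:ℝ) 1, C u v ∈ Icc (0:ℝ) 1) ∧
  (∀ u ∈ Icc (0:ℝ) 1, C u 0 = 0 ∧ C u 1 = u) ∧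
  (∀ v ∈ Icc (0:ℝ) 1, C 0 v = 0 ∧ C 1 v = v) ∧
  (∀ u₁ ∈ Icc (0:ℝ) 1, ∀ u₂ ∈ Icc (0:ℝ) 1, ∀ v₁ ∈ Icc (0:ℝ) 1, ∀ v₂ ∈ Icc (0:ℝ) 1,
    u₁ ≤ u₂ → v₁ ≤ v₂ → 0 ≤ C u₂ v₂ - C u₁ v₂ - C u₂ v₁ + C u₁ v₁)

/-- The (a.e. defined) partial derivative of `C` with respect to its first argument. -/
def d1 (C : ℝ → ℝ → ℝ) (t v : ℝ) : ℝ := deriv (fun s => C s v) t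

/-- Chatterjee's rank correlation. -/
def xi (C : ℝ → ℝ → ℝ) : ℝ :=
  6 * (∫ v in (0:ℝ)..1, ∫ t in (0:ℝ)..1, (d1 C t v) ^ 2) - 2

/-- Spearman's footrule. -/
def psi (C : ℝ → ℝ → ℝ) : ℝ :=
  6 * (∫ v in (0:ℝ)..1, C v v) - 2

/-- Stochastically increasing: for each `v`, `t ↦ ∂₁C(t,v)` agrees a.e. on `[0,1]`
with a non-increasing function. -/
def IsSI (C : ℝ → ℝ → ℝ) : Prop :=
  ∀ v ∈ Icc (0:ℝ) 1, ∃ g : ℝ → ℝ, AntitoneOn g (Icc (0:ℝ) 1) ∧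
    (∀ᵐ t ∂(volume.restrict (Icc (0:ℝ) 1)), d1 C t v = g t)

namespace LBE

def clamp (x : ℝ) : ℝ := max 0 (min 1 x)

lemma clamp_mem (x : ℝ) : clamp x ∈ Icc (0:ℝ) 1 :=
  ⟨le_max_left _ _, max_le zero_le_one (min_le_left _ _)⟩

lemma clamp_of_mem {x : ℝ} (hx : x ∈ Icc (0:ℝ) 1) : clamp x = x := by
  simp only [clamp]
  rw [min_eq_right hx.2, max_eq_right hx.1]

lemma clamp_mono : Monotone clamp := fun _ _ h =>
  max_le_max le_rfl (min_le_min le_rfl h)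

lemma clamp_lipschitz : LipschitzWith 1 clamp := by
  have h : clamp = fun x => max (min x 1) 0 := by
    funext x; simp [clamp, max_comm, min_comm]
  rw [h]; exact (LipschitzWith.id.min_const 1).max_const 0

def Cc (C : ℝ → ℝ → ℝ) (s v : ℝ) : ℝ := C (clamp s) (clamp v)

variable {C : ℝ → ℝ → ℝ} (hC : IsCopula C)

/-- monotone in first argument on the square -/
lemma mono1 (hC : IsCopula C) {u₁ u₂ v : ℝ} (h1 : u₁ ∈ Icc (0:ℝ) 1)
    (h2 : u₂ ∈ Icc (0:ℝ) 1) (hv : v ∈ Icc (0:ℝ) 1) (h : u₁ ≤ u₂) :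
    C u₁ v ≤ C u₂ v := by
  have := hC.2.2.2 u₁ h1 u₂ h2 0 (by norm_num) v hv h hv.1
  have e1 := (hC.2.1 u₁ h1).1
  have e2 := (hC.2.1 u₂ h2).1
  linarith

/-- 1-Lipschitz in first argument on the square -/
lemma lip1 (hC : IsCopula C) {u₁ u₂ v : ℝ} (h1 : u₁ ∈ Icc (0:ℝ) 1)
    (h2 : u₂ ∈ Icc (0:ℝ) 1) (hv : v ∈ Icc (0:ℝ) 1) (h : u₁ ≤ u₂) :
    C u₂ v - C u₁ v ≤ u₂ - u₁ := by
  have := hC.2.2.2 u₁ h1 u₂ h2 v hv 1 (by norm_num) h hv.2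
  have e1 := (hC.2.1 u₁ h1).2
  have e2 := (hC.2.1 u₂ h2).2
  linarith

lemma mono2 (hC : IsCopula C) {u v₁ v₂ : ℝ} (hu : u ∈ Icc (0:ℝ) 1)
    (h1 : v₁ ∈ Icc (0:ℝ) 1) (h2 : v₂ ∈ Icc (0:ℝ) 1) (h : v₁ ≤ v₂) :
    C u v₁ ≤ C u v₂ := by
  have := hC.2.2.2 0 (by norm_num) u hu v₁ h1 v₂ h2 hu.1 h
  have e1 := (hC.2.2.1 v₁ h1).1
  have e2 := (hC.2.2.1 v₂ h2).1
  linarith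

lemma lip2 (hC : IsCopula C) {u v₁ v₂ : ℝ} (hu : u ∈ Icc (0:ℝ) 1)
    (h1 : v₁ ∈ Icc (0:ℝ) 1) (h2 : v₂ ∈ Icc (0:ℝ) 1) (h : v₁ ≤ v₂) :
    C u v₂ - C u v₁ ≤ v₂ - v₁ := by
  have := hC.2.2.2 u hu 1 (by norm_num) v₁ h1 v₂ h2 hu.2 h
  have e1 := (hC.2.2.1 v₁ h1).2
  have e2 := (hC.2.2.1 v₂ h2).2
  linarith

lemma clamp_sub_le {s t : ℝ} (h : s ≤ t) : clamp t - clamp s ≤ t - s := by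
  have h1 : clamp s ≤ clamp t := clamp_mono h
  have := clamp_lipschitz.dist_le_mul t s
  simp only [Real.dist_eq, NNReal.coe_one, one_mul] at this
  rw [abs_of_nonneg (by linarith), abs_of_nonneg (by linarith)] at this
  exact this

lemma Cc_key (hC : IsCopula C) (v : ℝ) {s t : ℝ} (h : s ≤ t) :
    Cc C s v ≤ Cc C t v ∧ Cc C t v - Cc C s v ≤ t - s := by
  have hc : clamp s ≤ clamp t := clamp_mono h
  have h2 := mono1 hC (clamp_mem s) (clamp_mem t) (clamp_mem v) hc
  have h1 := lip1 hC (clamp_mem s) (clamp_mem t) (clamp_mem v) hc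
  have h3 := clamp_sub_le h
  unfold Cc
  exact ⟨h2, by linarith⟩

lemma Cc_mono1 (hC : IsCopula C) (v : ℝ) : Monotone (fun s => Cc C s v) :=
  fun _ _ hst => (Cc_key hC v hst).1

lemma Cc_lip1 (hC : IsCopula C) (v : ℝ) : LipschitzWith 1 (fun s => Cc C s v) := by
  apply LipschitzWith.of_dist_le_mul
  intro s t
  simp only [Real.dist_eq, NNReal.coe_one, one_mul]
  rcases le_total s t with h | h
  · obtain ⟨h1, h2⟩ := Cc_key hC v h
    rw [abs_sub_comm, abs_of_nonneg (by linarith), abs_sub_comm, abs_of_nonneg (by linarith)]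
    exact h2
  · obtain ⟨h1, h2⟩ := Cc_key hC v h
    rw [abs_of_nonneg (by linarith), abs_of_nonneg (by linarith)]
    exact h2

lemma Cc_key2 (hC : IsCopula C) (s : ℝ) {v w : ℝ} (h : v ≤ w) :
    Cc C s v ≤ Cc C s w ∧ Cc C s w - Cc C s v ≤ w - v := by
  have hc : clamp v ≤ clamp w := clamp_mono h
  have h2 := mono2 hC (clamp_mem s) (clamp_mem v) (clamp_mem w) hc
  have h1 := lip2 hC (clamp_mem s) (clamp_mem v) (clamp_mem w) hc
  have h3 := clamp_sub_le h
  unfold Cc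
  exact ⟨h2, by linarith⟩

lemma Cc_dist2 (hC : IsCopula C) (s v w : ℝ) : |Cc C s v - Cc C s w| ≤ |v - w| := by
  rcases le_total v w with h | h
  · obtain ⟨h1, h2⟩ := Cc_key2 hC s h
    rw [abs_sub_comm, abs_of_nonneg (by linarith), abs_sub_comm, abs_of_nonneg (by linarith)]
    exact h2
  · obtain ⟨h1, h2⟩ := Cc_key2 hC s h
    rw [abs_of_nonneg (by linarith), abs_of_nonneg (by linarith)]
    exact h2

lemma Cc_cont (hC : IsCopula C) : Continuous (fun p : ℝ × ℝ => Cc C p.1 p.2) := by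
  apply LipschitzWith.continuous (K := 2)
  apply LipschitzWith.of_dist_le_mul
  rintro ⟨s, v⟩ ⟨t, w⟩
  have h1 : |Cc C s v - Cc C t v| ≤ |s - t| := by
    have := (Cc_lip1 hC v).dist_le_mul s t
    simpa [Real.dist_eq] using this
  have h2 := Cc_dist2 hC t v w
  have hd : dist (s, v) (t, w) = max (dist s t) (dist v w) := rfl
  simp only [Real.dist_eq] at *
  rw [hd]
  calc |Cc C s v - Cc C t w| ≤ |Cc C s v - Cc C t v| + |Cc C t v - Cc C t w| := abs_sub_le _ _ _
  _ ≤ |s - t| + |v - w| := add_le_add h1 h2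
  _ ≤ max |s - t| |v - w| + max |s - t| |v - w| := add_le_add (le_max_left _ _) (le_max_right _ _)
  _ = 2 * max |s - t| |v - w| := by ring

end LBE

namespace LBE2
-- standalone test of derivative lemmas with hypotheses abstracted:
-- f monotone, 1-Lipschitz in the combined sense: s ≤ t → f s ≤ f t ∧ f t - f s ≤ t - s
variable {f : ℝ → ℝ} (hf : ∀ {s t : ℝ}, s ≤ t → f s ≤ f t ∧ f t - f s ≤ t - s)

lemma slope_mem (hf : ∀ {s t : ℝ}, s ≤ t → f s ≤ f t ∧ f t - f s ≤ t - s)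
    (t : ℝ) {s : ℝ} (hs : s ≠ t) : slope f t s ∈ Icc (0:ℝ) 1 := by
  rcases lt_or_gt_of_ne hs with h | h
  · obtain ⟨h1, h2⟩ := hf h.le
    rw [slope_comm, slope_def_field]
    constructor
    · apply div_nonneg <;> linarith
    · rw [div_le_one (by linarith)]; linarith
  · obtain ⟨h1, h2⟩ := hf h.le
    rw [slope_def_field]
    constructor
    · apply div_nonneg <;> linarith
    · rw [div_le_one (by linarith)]; linarith

lemma deriv_mem (hf : ∀ {s t : ℝ}, s ≤ t → f s ≤ f t ∧ f t - f s ≤ t - s)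
    (t : ℝ) : deriv f t ∈ Icc (0:ℝ) 1 := by
  by_cases hd : DifferentiableAt ℝ f t
  · have hT : Tendsto (slope f t) (𝓝[≠] t) (𝓝 (deriv f t)) :=
      hasDerivAt_iff_tendsto_slope.1 hd.hasDerivAt
    exact isClosed_Icc.mem_of_tendsto hT
      (eventually_nhdsWithin_of_forall (fun s hs => slope_mem hf t hs))
  · rw [deriv_zero_of_not_differentiableAt hd]; norm_num

lemma q_tendsto (hd : DifferentiableAt ℝ f t) :
    Tendsto (fun n : ℕ => (n+1 : ℝ) * (f (t + 1/(n+1)) - f t)) atTop (𝓝 (deriv f t)) := by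
  have hT : Tendsto (slope f t) (𝓝[≠] t) (𝓝 (deriv f t)) :=
    hasDerivAt_iff_tendsto_slope.1 hd.hasDerivAt
  have h0 : Tendsto (fun n : ℕ => t + 1/(n+1 : ℝ)) atTop (𝓝[≠] t) := by
    rw [tendsto_nhdsWithin_iff]
    constructor
    · have : Tendsto (fun n : ℕ => 1/(n+1 : ℝ)) atTop (𝓝 0) :=
        tendsto_one_div_add_atTop_nhds_zero_nat
      simpa using tendsto_const_nhds.add this
    · filter_upwards with n
      have : (0:ℝ) < 1/(n+1) := by positivity
      simp only [mem_compl_iff, mem_singleton_iff]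
      intro h; nlinarith [h]
  have := hT.comp h0
  apply this.congr
  intro n
  rw [Function.comp_apply, slope_def_field]
  have h1 : (0:ℝ) < 1/(n+1 : ℝ) := by positivity
  field_simp
  ring

end LBE2

namespace LBE3
open intervalIntegral
variable {f : ℝ → ℝ}

lemma lip_of_key (hf : ∀ {s t : ℝ}, s ≤ t → f s ≤ f t ∧ f t - f s ≤ t - s) :
    LipschitzWith 1 f := by
  apply LipschitzWith.of_dist_le_mul
  intro s t
  simp only [Real.dist_eq, NNReal.coe_one, one_mul]
  rcases le_total s t with h | h
  · obtain ⟨h1, h2⟩ := hf h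
    rw [abs_sub_comm, abs_of_nonneg (by linarith), abs_sub_comm, abs_of_nonneg (by linarith)]
    exact h2
  · obtain ⟨h1, h2⟩ := hf h
    rw [abs_of_nonneg (by linarith), abs_of_nonneg (by linarith)]
    exact h2

lemma avg_tendsto (hf : ∀ {s t : ℝ}, s ≤ t → f s ≤ f t ∧ f t - f s ≤ t - s) (y : ℝ) :
    Tendsto (fun n : ℕ => (n+1 : ℝ) * ∫ t in y..(y + 1/(n+1)), f t) atTop (𝓝 (f y)) := by
  have hcont : Continuous f := (lip_of_key hf).continuous
  have key : ∀ n : ℕ, (n+1 : ℝ) * ∫ t in y..(y + 1/(n+1)), f t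
      = ((n+1 : ℝ) * ∫ t in y..(y + 1/(n+1)), (f t - f y)) + f y := by
    intro n
    have h1 : (0:ℝ) < 1/(n+1) := by positivity
    rw [intervalIntegral.integral_sub (hcont.intervalIntegrable _ _)
      (intervalIntegrable_const), intervalIntegral.integral_const]
    simp only [smul_eq_mul]
    field_simp
    ring
  have h0 : Tendsto (fun n : ℕ => (n+1 : ℝ) * ∫ t in y..(y + 1/(n+1)), (f t - f y))
      atTop (𝓝 0) := by
    apply squeeze_zero_norm (a := fun n : ℕ => 1/(n+1 : ℝ))
    · intro n
      have h1 : (0:ℝ) < 1/(n+1) := by positivity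
      have hb : ∀ t ∈ Set.uIoc y (y + 1/(n+1)), ‖f t - f y‖ ≤ 1/(n+1 : ℝ) := by
        intro t ht
        rw [uIoc_of_le (by linarith)] at ht
        obtain ⟨hl, hr⟩ := ht
        obtain ⟨m1, m2⟩ := hf hl.le
        rw [Real.norm_eq_abs, abs_of_nonneg (by linarith)]
        linarith
      have := intervalIntegral.norm_integral_le_of_norm_le_const hb
      rw [Real.norm_eq_abs, abs_mul, abs_of_nonneg (by positivity : (0:ℝ) ≤ (n+1:ℝ))]
      have h2 : |y + 1/(n+1) - y| = 1/(n+1 : ℝ) := by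
        rw [add_sub_cancel_left, abs_of_pos h1]
      rw [h2] at this
      calc (n+1 : ℝ) * |∫ t in y..(y + 1/(n+1)), (f t - f y)|
          ≤ (n+1 : ℝ) * (1/(n+1) * (1/(n+1))) := by
            apply mul_le_mul_of_nonneg_left _ (by positivity)
            simpa [Real.norm_eq_abs] using this
        _ = 1/(n+1 : ℝ) := by field_simp
    · exact tendsto_one_div_add_atTop_nhds_zero_nat
  have := h0.add (tendsto_const_nhds (x := f y))
  rw [zero_add] at this
  exact (this.congr (fun n => (key n).symm))

lemma ftc_abs (hf : ∀ {s t : ℝ}, s ≤ t → f s ≤ f t ∧ f t - f s ≤ t - s) (x : ℝ) :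
    ∫ t in (0:ℝ)..x, deriv f t = f x - f 0 := by
  have hcont : Continuous f := (lip_of_key hf).continuous
  set F : ℕ → ℝ → ℝ := fun n t => (n+1 : ℝ) * (f (t + 1/(n+1)) - f t) with hF
  have hDCT : Tendsto (fun n => ∫ t in (0:ℝ)..x, F n t) atTop
      (𝓝 (∫ t in (0:ℝ)..x, deriv f t)) := by
    apply intervalIntegral.tendsto_integral_filter_of_dominated_convergence
      (bound := fun _ => 1)
    · filter_upwards with n
      exact ((continuous_const.mul ((hcont.comp (continuous_id.add continuous_const)).sub
        hcont))).aestronglyMeasurable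
    · filter_upwards with n
      filter_upwards with t _
      have h1 : (0:ℝ) < 1/(n+1) := by positivity
      obtain ⟨m1, m2⟩ := hf (by linarith : t ≤ t + 1/(n+1))
      rw [Real.norm_eq_abs, abs_mul, abs_of_nonneg (by positivity : (0:ℝ) ≤ (n+1:ℝ)),
        abs_of_nonneg (by linarith)]
      calc (n+1 : ℝ) * (f (t + 1/(n+1)) - f t) ≤ (n+1 : ℝ) * (1/(n+1)) :=
            mul_le_mul_of_nonneg_left (by linarith) (by positivity)
        _ = 1 := by field_simp
    · exact intervalIntegrable_const
    · have hae := (lip_of_key hf).ae_differentiableAt (μ := volume)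
      filter_upwards [hae] with t ht _
      exact LBE2.q_tendsto ht
  have hcomp : ∀ n : ℕ, ∫ t in (0:ℝ)..x, F n t
      = ((n+1 : ℝ) * ∫ t in x..(x + 1/(n+1)), f t)
        - ((n+1 : ℝ) * ∫ t in (0:ℝ)..(0 + 1/(n+1)), f t) := by
    intro n
    have h1 : (0:ℝ) < 1/(n+1) := by positivity
    have i1 : ∀ a b : ℝ, IntervalIntegrable f volume a b :=
      fun a b => hcont.intervalIntegrable a b
    have e1 : ∫ t in (0:ℝ)..x, f (t + 1/(n+1))
        = ∫ t in (0 + 1/(n+1) : ℝ)..(x + 1/(n+1)), f t :=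
      intervalIntegral.integral_comp_add_right _ _
    have a1 : (∫ t in (0 + 1/(n+1) : ℝ)..x, f t) + ∫ t in x..(x + 1/(n+1)), f t
        = ∫ t in (0 + 1/(n+1) : ℝ)..(x + 1/(n+1)), f t :=
      intervalIntegral.integral_add_adjacent_intervals (i1 _ _) (i1 _ _)
    have a2 : (∫ t in (0:ℝ)..(0 + 1/(n+1)), f t) + ∫ t in (0 + 1/(n+1) : ℝ)..x, f t
        = ∫ t in (0:ℝ)..x, f t :=
      intervalIntegral.integral_add_adjacent_intervals (i1 _ _) (i1 _ _)
    have e0 : ∫ t in (0:ℝ)..x, (f (t + 1/(n+1)) - f t)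
        = (∫ t in (0:ℝ)..x, f (t + 1/(n+1))) - ∫ t in (0:ℝ)..x, f t :=
      intervalIntegral.integral_sub
        ((hcont.comp (continuous_id.add continuous_const)).intervalIntegrable _ _) (i1 _ _)
    rw [hF]
    simp only
    rw [intervalIntegral.integral_const_mul, e0, e1, ← a1, ← a2]
    ring
  have hlim2 : Tendsto (fun n => ∫ t in (0:ℝ)..x, F n t) atTop (𝓝 (f x - f 0)) := by
    have := (avg_tendsto hf x).sub (avg_tendsto hf 0)
    exact (this.congr (fun n => (hcomp n).symm))
  exact tendsto_nhds_unique hDCT hlim2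

end LBE3

namespace LBE
open Filter intervalIntegral

lemma clamp_of_nonpos {x : ℝ} (h : x ≤ 0) : clamp x = 0 := by
  simp only [clamp]
  rw [min_eq_right (h.trans zero_le_one), max_eq_left h]

lemma clamp_of_one_le {x : ℝ} (h : 1 ≤ x) : clamp x = 1 := by
  simp only [clamp]
  rw [min_eq_left h, max_eq_right zero_le_one]

/-- pointwise convexity minimization -/
lemma quad_min {s x : ℝ} (hx : x ∈ Icc (0:ℝ) 1) :
    (clamp (-s/2))^2 + s * (clamp (-s/2)) ≤ x^2 + s*x := by
  obtain ⟨hx0, hx1⟩ := hx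
  rcases le_or_gt (-s/2) 0 with h | h
  · rw [clamp_of_nonpos h]; nlinarith
  · rcases le_or_gt (-s/2) 1 with h2 | h2
    · rw [clamp_of_mem ⟨h.le, h2⟩]; nlinarith [sq_nonneg (x + s/2)]
    · rw [clamp_of_one_le h2.le]; nlinarith

def A (μ v : ℝ) : ℝ :=
  if v ≤ μ/(2+μ) then 0 else if v ≤ 2/(2+μ) then (v*(2+μ)-μ)/2 else (2*v-1)/v

def B (μ v : ℝ) : ℝ :=
  if v ≤ μ/(2+μ) then v/(1-v) else if v ≤ 2/(2+μ) then v*(2+μ)/2 else 1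

def lam (μ v : ℝ) : ℝ :=
  if v ≤ 2/(2+μ) then -(2 * B μ v) else -(μ + 2 * A μ v)

def Fq (μ v : ℝ) : ℝ := v * (A μ v)^2 + (1-v)*(B μ v)^2 + μ * (A μ v) * v

lemma AB_facts {μ v : ℝ} (hμ : μ ∈ Icc (0:ℝ) 2) (hv : v ∈ Icc (0:ℝ) 1) :
    A μ v = clamp (-(μ + lam μ v)/2) ∧ B μ v = clamp (-(lam μ v)/2) ∧
      A μ v * v + B μ v * (1-v) = v := by
  obtain ⟨hμ0, hμ2⟩ := hμ
  obtain ⟨hv0, hv1⟩ := hv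
  have hk : (0:ℝ) < 2 + μ := by linarith
  have hv0v1 : μ/(2+μ) ≤ 2/(2+μ) := (div_le_div_iff_of_pos_right hk).mpr hμ2
  by_cases h1 : v ≤ μ/(2+μ)
  · -- region 1
    have h2 : v ≤ 2/(2+μ) := h1.trans hv0v1
    have hvhalf : v ≤ 1/2 := by
      refine h1.trans ?_
      rw [div_le_div_iff₀ hk (by norm_num)]
      linarith
    have h1v : (0:ℝ) < 1 - v := by linarith
    simp only [A, B, lam, if_pos h1, if_pos h2]
    have hBmem : v/(1-v) ∈ Icc (0:ℝ) 1 := by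
      constructor
      · positivity
      · rw [div_le_one h1v]; linarith
    refine ⟨?_, ?_, ?_⟩
    · rw [eq_comm]
      apply clamp_of_nonpos
      have hvk : v * (2+μ) ≤ μ := by
        rw [le_div_iff₀ hk] at h1; exact h1
      have : v/(1-v) ≤ μ/2 := by
        rw [div_le_div_iff₀ h1v (by norm_num)]
        linarith
      linarith
    · rw [eq_comm]
      have : -(-(2 * (v/(1-v))))/2 = v/(1-v) := by ring
      rw [this]
      exact clamp_of_mem hBmem
    · field_simp
      ring
  · push_neg at h1
    by_cases h2 : v ≤ 2/(2+μ)
    · -- region 2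
      have hA0 : 0 ≤ (v*(2+μ)-μ)/2 := by
        rw [div_lt_iff₀ hk] at h1
        nlinarith
      have hB1 : v*(2+μ)/2 ≤ 1 := by
        rw [le_div_iff₀ hk] at h2
        linarith
      simp only [A, B, lam, if_neg (not_le.2 h1), if_pos h2]
      refine ⟨?_, ?_, ?_⟩
      · rw [eq_comm]
        have e : -(μ + -(2 * (v*(2+μ)/2)))/2 = (v*(2+μ)-μ)/2 := by ring
        rw [e]
        apply clamp_of_mem
        constructor
        · exact hA0
        · nlinarith
      · rw [eq_comm]
        have e : -(-(2 * (v*(2+μ)/2)))/2 = v*(2+μ)/2 := by ring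
        rw [e]
        apply clamp_of_mem
        constructor
        · positivity
        · exact hB1
      · ring
    · -- region 3
      push_neg at h2
      have hhalf : (1:ℝ)/2 ≤ 2/(2+μ) := by
        rw [div_le_div_iff₀ (by norm_num) hk]
        linarith
      have hvpos : (0:ℝ) < v := lt_of_lt_of_le (by linarith) h2.le
      have hvk : 2 < v * (2+μ) := by
        rw [div_lt_iff₀ hk] at h2
        linarith
      have hAmem : (2*v-1)/v ∈ Icc (0:ℝ) 1 := by
        constructor
        · apply div_nonneg _ hvpos.le
          nlinarith
        · rw [div_le_one hvpos]; linarith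
      simp only [A, B, lam, if_neg (not_le.2 h1), if_neg (not_le.2 h2)]
      refine ⟨?_, ?_, ?_⟩
      · rw [eq_comm]
        have e : -(μ + -(μ + 2 * ((2*v-1)/v)))/2 = (2*v-1)/v := by ring
        rw [e]
        exact clamp_of_mem hAmem
      · rw [eq_comm]
        apply clamp_of_one_le
        have e : -(-(μ + 2 * ((2*v-1)/v)))/2 = μ/2 + (2*v-1)/v := by ring
        rw [e]
        have key : 1 * v ≤ (μ/2 + (2*v-1)/v) * v := by
          have e2 : (μ/2 + (2*v-1)/v) * v = (μ/2)*v + (2*v-1) := by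
            field_simp
          rw [e2]; nlinarith
        exact le_of_mul_le_mul_right key hvpos
      · field_simp
        ring

end LBE

namespace LBE
open Filter intervalIntegral

lemma bdd_intervalIntegrable {g : ℝ → ℝ} (hm : Measurable g) {M : ℝ}
    (hb : ∀ t, |g t| ≤ M) (p q : ℝ) : IntervalIntegrable g volume p q := by
  rw [intervalIntegrable_iff]
  exact Measure.integrableOn_of_bounded (measure_Ioc_lt_top).ne
    hm.aestronglyMeasurable (ae_of_all _ fun t => hb t)

variable {C : ℝ → ℝ → ℝ}

lemma per_v (hC : IsCopula C) {μ v : ℝ} (hμ : μ ∈ Icc (0:ℝ) 2) (hv : v ∈ Icc (0:ℝ) 1) :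
    Fq μ v ≤ μ * C v v + ∫ t in (0:ℝ)..1, (deriv (fun s => Cc C s v) t)^2 := by
  set g : ℝ → ℝ := fun t => deriv (fun s => Cc C s v) t with hgdef
  have hf : ∀ {s t : ℝ}, s ≤ t → Cc C s v ≤ Cc C t v ∧ Cc C t v - Cc C s v ≤ t - s :=
    fun {s t} h => Cc_key hC v h
  have hgmem : ∀ t, g t ∈ Icc (0:ℝ) 1 := fun t => LBE2.deriv_mem hf t
  have hgm : Measurable g := measurable_deriv _
  have hgabs : ∀ t, |g t| ≤ 1 := fun t =>
    abs_le.2 ⟨by linarith [(hgmem t).1], (hgmem t).2⟩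
  -- FTC facts
  have hC0 : Cc C 0 v = 0 := by
    rw [Cc, clamp_of_mem (by norm_num : (0:ℝ) ∈ Icc (0:ℝ) 1), clamp_of_mem hv]
    exact (hC.2.2.1 v hv).1
  have ftc0 : ∀ x : ℝ, ∫ t in (0:ℝ)..x, g t = Cc C x v := by
    intro x
    rw [hgdef, LBE3.ftc_abs hf x, hC0, sub_zero]
  have ftc0v : ∫ t in (0:ℝ)..v, g t = C v v := by
    rw [ftc0 v, Cc, clamp_of_mem hv]
  have ftc01 : ∫ t in (0:ℝ)..1, g t = v := by
    rw [ftc0 1, Cc, clamp_of_mem (by norm_num : (1:ℝ) ∈ Icc (0:ℝ) 1), clamp_of_mem hv]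
    exact (hC.2.2.1 v hv).2
  -- integrability
  have hintg : ∀ p q : ℝ, IntervalIntegrable g volume p q :=
    bdd_intervalIntegrable hgm hgabs
  have hintg2 : ∀ p q : ℝ, IntervalIntegrable (fun t => (g t)^2) volume p q := by
    intro p q
    apply bdd_intervalIntegrable (hgm.pow_const 2) (M := 1)
    intro t
    rw [abs_pow]
    calc |g t|^2 ≤ 1^2 := by
          apply pow_le_pow_left₀ (abs_nonneg _) (hgabs t)
    _ = 1 := one_pow 2
  have hintq : ∀ (c : ℝ) (p q : ℝ),
      IntervalIntegrable (fun t => (g t)^2 + c * g t) volume p q := by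
    intro c p q
    exact (hintg2 p q).add ((hintg p q).const_mul c)
  have ftcv1 : ∫ t in v..1, g t = v - C v v := by
    have := integral_add_adjacent_intervals (hintg 0 v) (hintg v 1)
    rw [ftc0v, ftc01] at this
    linarith
  have hsplit2 : (∫ t in (0:ℝ)..v, (g t)^2) + ∫ t in v..1, (g t)^2
      = ∫ t in (0:ℝ)..1, (g t)^2 :=
    integral_add_adjacent_intervals (hintg2 0 v) (hintg2 v 1)
  obtain ⟨hA, hB, hsum⟩ := AB_facts hμ hv
  set a := A μ v
  set b := B μ v
  set l := lam μ v
  -- pointwise inequalities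
  have I1 : v * (a^2 + (μ + l) * a) ≤ ∫ t in (0:ℝ)..v, ((g t)^2 + (μ + l) * g t) := by
    have hmono : ∀ t ∈ Icc (0:ℝ) v, a^2 + (μ + l)*a ≤ (g t)^2 + (μ + l) * g t := by
      intro t _
      have := quad_min (s := μ + l) (hgmem t)
      rw [← hA] at this
      linarith
    have := intervalIntegral.integral_mono_on (μ := volume) hv.1
      (_root_.intervalIntegrable_const (c := a^2 + (μ + l)*a)) (hintq (μ + l) 0 v) hmono
    rw [intervalIntegral.integral_const, smul_eq_mul, sub_zero] at this
    exact this
  have I2 : (1-v) * (b^2 + l * b) ≤ ∫ t in v..1, ((g t)^2 + l * g t) := by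
    have hmono : ∀ t ∈ Icc v 1, b^2 + l*b ≤ (g t)^2 + l * g t := by
      intro t _
      have := quad_min (s := l) (hgmem t)
      rw [← hB] at this
      linarith
    have := intervalIntegral.integral_mono_on (μ := volume) hv.2
      (_root_.intervalIntegrable_const (c := b^2 + l*b)) (hintq l v 1) hmono
    rw [intervalIntegral.integral_const, smul_eq_mul] at this
    exact this
  -- expand integrals
  have E1 : ∫ t in (0:ℝ)..v, ((g t)^2 + (μ + l) * g t)
      = (∫ t in (0:ℝ)..v, (g t)^2) + (μ + l) * C v v := by
    rw [intervalIntegral.integral_add (hintg2 0 v) ((hintg 0 v).const_mul _),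
      intervalIntegral.integral_const_mul, ftc0v]
  have E2 : ∫ t in v..1, ((g t)^2 + l * g t)
      = (∫ t in v..1, (g t)^2) + l * (v - C v v) := by
    rw [intervalIntegral.integral_add (hintg2 v 1) ((hintg v 1).const_mul _),
      intervalIntegral.integral_const_mul, ftcv1]
  rw [E1] at I1
  rw [E2] at I2
  have key : v * (a^2 + (μ + l) * a) + (1-v) * (b^2 + l*b)
      = (v * a^2 + (1-v)*b^2 + μ * a * v) + l * (a * v + b * (1-v)) := by ring
  have hl : l * (a * v + b * (1-v)) = l * v := by rw [hsum]
  have hFq : Fq μ v = v * a^2 + (1-v)*b^2 + μ * a * v := rfl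
  rw [hFq]
  nlinarith [I1, I2, key, hl, hsplit2]

end LBE

namespace LBE
open Filter intervalIntegral

variable {C : ℝ → ℝ → ℝ}

/-- inner integral as a function of v -/
def Iv (C : ℝ → ℝ → ℝ) (v : ℝ) : ℝ :=
  ∫ t in (0:ℝ)..1, (deriv (fun s => Cc C s v) t)^2

def qn (C : ℝ → ℝ → ℝ) (n : ℕ) (t v : ℝ) : ℝ :=
  (n+1 : ℝ) * (Cc C (t + 1/(n+1)) v - Cc C t v)

lemma qn_mem (hC : IsCopula C) (n : ℕ) (t v : ℝ) : qn C n t v ∈ Icc (0:ℝ) 1 := by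
  have h1 : (0:ℝ) < 1/(n+1 : ℝ) := by positivity
  obtain ⟨m1, m2⟩ := Cc_key hC v (by linarith : t ≤ t + 1/(n+1))
  unfold qn
  constructor
  · have : (0:ℝ) ≤ (n+1 : ℝ) := by positivity
    nlinarith
  · calc (n+1 : ℝ) * (Cc C (t + 1/(n+1)) v - Cc C t v) ≤ (n+1 : ℝ) * (1/(n+1)) :=
        mul_le_mul_of_nonneg_left (by linarith) (by positivity)
    _ = 1 := by field_simp

lemma Jn_continuous (hC : IsCopula C) (n : ℕ) :
    Continuous (fun v => ∫ t in (0:ℝ)..1, (qn C n t v)^2) := by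
  apply intervalIntegral.continuous_of_dominated_interval (bound := fun _ => 1)
  · intro v
    have : Continuous (fun t => (qn C n t v)^2) := by
      apply Continuous.pow
      apply Continuous.mul continuous_const
      exact ((Cc_cont hC).comp ((continuous_id.add continuous_const).prodMk
        continuous_const)).sub ((Cc_cont hC).comp (continuous_id.prodMk continuous_const))
    exact this.aestronglyMeasurable
  · intro v
    filter_upwards with t _
    obtain ⟨hq0, hq1⟩ := qn_mem hC n t v
    rw [Real.norm_eq_abs, abs_pow, abs_of_nonneg hq0]
    nlinarith
  · exact intervalIntegrable_const
  · filter_upwards with t _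
    apply Continuous.pow
    apply Continuous.mul continuous_const
    exact ((Cc_cont hC).comp (continuous_const.prodMk continuous_id)).sub
      ((Cc_cont hC).comp (continuous_const.prodMk continuous_id))

lemma Jn_tendsto (hC : IsCopula C) (v : ℝ) :
    Tendsto (fun n => ∫ t in (0:ℝ)..1, (qn C n t v)^2) atTop (𝓝 (Iv C v)) := by
  apply intervalIntegral.tendsto_integral_filter_of_dominated_convergence
    (bound := fun _ => 1)
  · filter_upwards with n
    have : Continuous (fun t => (qn C n t v)^2) := by
      apply Continuous.pow
      apply Continuous.mul continuous_const
      exact ((Cc_cont hC).comp ((continuous_id.add continuous_const).prodMk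
        continuous_const)).sub ((Cc_cont hC).comp (continuous_id.prodMk continuous_const))
    exact this.aestronglyMeasurable
  · filter_upwards with n
    filter_upwards with t _
    obtain ⟨hq0, hq1⟩ := qn_mem hC n t v
    rw [Real.norm_eq_abs, abs_pow, abs_of_nonneg hq0]
    nlinarith
  · exact intervalIntegrable_const
  · have hae := (Cc_lip1 hC v).ae_differentiableAt (μ := volume)
    filter_upwards [hae] with t ht _
    have := LBE2.q_tendsto (f := fun s => Cc C s v) ht
    exact (this.pow 2).congr (fun n => rfl)

lemma Iv_measurable (hC : IsCopula C) : Measurable (Iv C) :=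
  measurable_of_tendsto_metrizable
    (fun n => (Jn_continuous hC n).measurable) (tendsto_pi_nhds.2 (Jn_tendsto hC))

lemma Iv_mem (hC : IsCopula C) (v : ℝ) : Iv C v ∈ Icc (0:ℝ) 1 := by
  have hf : ∀ {s t : ℝ}, s ≤ t → Cc C s v ≤ Cc C t v ∧ Cc C t v - Cc C s v ≤ t - s :=
    fun {s t} h => Cc_key hC v h
  have hgmem : ∀ t, deriv (fun s => Cc C s v) t ∈ Icc (0:ℝ) 1 :=
    fun t => LBE2.deriv_mem hf t
  have hm : Measurable (fun t => (deriv (fun s => Cc C s v) t)^2) :=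
    (measurable_deriv _).pow_const 2
  constructor
  · apply intervalIntegral.integral_nonneg (by norm_num)
    intro t _
    positivity
  · unfold Iv
    calc ∫ t in (0:ℝ)..1, (deriv (fun s => Cc C s v) t)^2
        ≤ ∫ t in (0:ℝ)..1, (1:ℝ) := by
          apply intervalIntegral.integral_mono_on (by norm_num)
          · apply bdd_intervalIntegrable hm (M := 1)
            intro t
            rw [abs_pow]
            obtain ⟨h0, h1⟩ := hgmem t
            rw [abs_of_nonneg h0]
            nlinarith
          · exact _root_.intervalIntegrable_const
          · intro t _
            obtain ⟨h0, h1⟩ := hgmem t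
            nlinarith
    _ = 1 := by simp

end LBE

namespace LBE
open Filter intervalIntegral

lemma bdd_intervalIntegrableOn {g : ℝ → ℝ} (hm : Measurable g) {M : ℝ} {p q : ℝ}
    (hb : ∀ t ∈ Set.uIoc p q, |g t| ≤ M) : IntervalIntegrable g volume p q := by
  rw [intervalIntegrable_iff]
  exact Measure.integrableOn_of_bounded (measure_Ioc_lt_top).ne
    hm.aestronglyMeasurable ((ae_restrict_iff' measurableSet_uIoc).2 (ae_of_all _ hb))

lemma A_measurable (μ : ℝ) : Measurable (A μ) := by
  unfold A
  apply Measurable.ite (measurableSet_le measurable_id measurable_const) measurable_const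
  apply Measurable.ite (measurableSet_le measurable_id measurable_const)
  · exact ((measurable_id.mul_const _).sub_const _).div_const _
  · exact ((measurable_const.mul measurable_id).sub_const 1).div measurable_id

lemma B_measurable (μ : ℝ) : Measurable (B μ) := by
  unfold B
  apply Measurable.ite (measurableSet_le measurable_id measurable_const)
  · exact measurable_id.div (measurable_const.sub measurable_id)
  · apply Measurable.ite (measurableSet_le measurable_id measurable_const)
    · exact (measurable_id.mul_const _).div_const _
    · exact measurable_const

lemma Fq_measurable (μ : ℝ) : Measurable (Fq μ) := by
  unfold Fq
  apply Measurable.add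
  apply Measurable.add
  · exact measurable_id.mul ((A_measurable μ).pow_const 2)
  · exact (measurable_const.sub measurable_id).mul ((B_measurable μ).pow_const 2)
  · exact (measurable_const.mul (A_measurable μ)).mul measurable_id

lemma Fq_intervalIntegrable {μ : ℝ} (hμ : μ ∈ Icc (0:ℝ) 2) {p q : ℝ}
    (hp : p ∈ Icc (0:ℝ) 1) (hq : q ∈ Icc (0:ℝ) 1) :
    IntervalIntegrable (Fq μ) volume p q := by
  apply bdd_intervalIntegrableOn (Fq_measurable μ) (M := 4)
  intro v hv
  have hvm : v ∈ Icc (0:ℝ) 1 := by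
    rcases hv with ⟨h1, h2⟩
    constructor
    · exact le_of_lt (lt_of_le_of_lt (le_min hp.1 hq.1) h1)
    · exact h2.trans (max_le hp.2 hq.2)
  obtain ⟨hA, hB, _⟩ := AB_facts hμ hvm
  have hAm : A μ v ∈ Icc (0:ℝ) 1 := hA ▸ clamp_mem _
  have hBm : B μ v ∈ Icc (0:ℝ) 1 := hB ▸ clamp_mem _
  obtain ⟨hv0, hv1⟩ := hvm
  obtain ⟨ha0, ha1⟩ := hAm
  obtain ⟨hb0, hb1⟩ := hBm
  obtain ⟨hμ0, hμ2⟩ := hμ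
  have hnn : 0 ≤ v * A μ v ^ 2 + (1 - v) * B μ v ^ 2 + μ * A μ v * v := by
    have t1 : 0 ≤ v * A μ v ^ 2 := by positivity
    have t2 : 0 ≤ (1 - v) * B μ v ^ 2 := by nlinarith
    have t3 : 0 ≤ μ * A μ v * v := by positivity
    linarith
  rw [Fq, abs_of_nonneg hnn]
  have u1 : v * A μ v ^ 2 ≤ 1 := by nlinarith
  have u2 : (1 - v) * B μ v ^ 2 ≤ 1 := by nlinarith
  have u3 : μ * A μ v * v ≤ 2 := by
    have w1 : A μ v * v ≤ 1 := by nlinarith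
    have w2 : 0 ≤ A μ v * v := by positivity
    nlinarith
  linarith

lemma Fq_integral {μ : ℝ} (hμ : μ ∈ Icc (0:ℝ) 2) :
    ∫ v in (0:ℝ)..1, Fq μ v =
      (μ * (-2 * (2 / (2 + μ)) ^ 2 + 6 * (2 / (2 + μ)) - 5 + 1 / (2 / (2 + μ))) +
        (-4 * (2 / (2 + μ)) ^ 2 + 20 * (2 / (2 + μ)) - 17 + 2 / (2 / (2 + μ))
          - 1 / (2 / (2 + μ)) ^ 2 - 12 * Real.log (2 / (2 + μ))) + 2 + 2 * μ) / 6 := by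
  obtain ⟨hμ0, hμ2⟩ := hμ
  have hk : (0:ℝ) < 2 + μ := by linarith
  set v0 := μ/(2+μ) with hv0def
  set V := 2/(2+μ) with hVdef
  have hv00 : 0 ≤ v0 := by positivity
  have hv0half : v0 ≤ 1/2 := by
    rw [hv0def, div_le_div_iff₀ hk (by norm_num)]; linarith
  have hVhalf : 1/2 ≤ V := by
    rw [hVdef, div_le_div_iff₀ (by norm_num) hk]; linarith
  have hV1 : V ≤ 1 := by
    rw [hVdef, div_le_one hk]; linarith
  have hVpos : 0 < V := by positivity
  have hv0V : v0 ≤ V := by linarith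
  have hsum1 : (1:ℝ) - v0 = V := by
    rw [hv0def, hVdef]; field_simp
    ring
  -- split the integral
  have hi1 := Fq_intervalIntegrable ⟨hμ0, hμ2⟩ (p := 0) (q := v0)
    (by norm_num) ⟨hv00, by linarith⟩
  have hi2 := Fq_intervalIntegrable ⟨hμ0, hμ2⟩ (p := v0) (q := V)
    ⟨hv00, by linarith⟩ ⟨by linarith, hV1⟩
  have hi3 := Fq_intervalIntegrable ⟨hμ0, hμ2⟩ (p := V) (q := 1)
    ⟨by linarith, hV1⟩ (by norm_num)
  have hsplit : ∫ v in (0:ℝ)..1, Fq μ v =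
      (∫ v in (0:ℝ)..v0, Fq μ v) + (∫ v in v0..V, Fq μ v) + ∫ v in V..1, Fq μ v := by
    rw [integral_add_adjacent_intervals hi1 hi2,
      integral_add_adjacent_intervals (hi1.trans hi2) hi3]
  -- piece 1
  have E1 : ∫ v in (0:ℝ)..v0, Fq μ v = ∫ v in (0:ℝ)..v0, v^2/(1-v) := by
    apply intervalIntegral.integral_congr_ae
    filter_upwards with v hv
    rw [uIoc_of_le hv00] at hv
    obtain ⟨h1, h2⟩ := hv
    have hle : v ≤ v0 := h2
    have h1v : (0:ℝ) < 1 - v := by linarith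
    rw [Fq, A, B, if_pos hle, if_pos hle]
    field_simp
    ring
  have hD1 : ∀ v ∈ uIcc (0:ℝ) v0,
      HasDerivAt (fun v : ℝ => -(v^2)/2 - v - Real.log (1-v)) (v^2/(1-v)) v := by
    intro v hv
    rw [uIcc_of_le hv00] at hv
    obtain ⟨h1, h2⟩ := hv
    have h1v : (0:ℝ) < 1 - v := by linarith
    have hd1 : HasDerivAt (fun v : ℝ => 1 - v) (-1) v := by
      simpa using (hasDerivAt_id v).const_sub 1
    have hlog : HasDerivAt (fun v : ℝ => Real.log (1-v)) ((1-v)⁻¹ * -1) v :=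
      (Real.hasDerivAt_log h1v.ne').comp v hd1
    have hpoly : HasDerivAt (fun v : ℝ => -(v^2)/2 - v) (-(2*v^1)/2 - 1) v :=
      (((hasDerivAt_pow 2 v).neg).div_const 2).sub (hasDerivAt_id v)
    have := hpoly.sub hlog
    refine this.congr_deriv ?_
    field_simp
    ring
  have hC1 : IntervalIntegrable (fun v : ℝ => v^2/(1-v)) volume 0 v0 := by
    apply ContinuousOn.intervalIntegrable
    apply ContinuousOn.div (continuousOn_pow 2) (continuousOn_const.sub continuousOn_id)
    intro v hv
    rw [uIcc_of_le hv00] at hv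
    obtain ⟨h1, h2⟩ := hv
    have : (0:ℝ) < 1 - v := by linarith
    exact this.ne'
  have V1 := integral_eq_sub_of_hasDerivAt hD1 hC1
  -- piece 2
  have E2 : ∫ v in v0..V, Fq μ v
      = ∫ v in v0..V, (((2+μ)^2*v^2 - μ^2*v)/4) := by
    apply intervalIntegral.integral_congr_ae
    filter_upwards with v hv
    rw [uIoc_of_le hv0V] at hv
    obtain ⟨h1, h2⟩ := hv
    rw [Fq, A, B, if_neg (not_le.2 h1), if_neg (not_le.2 h1), if_pos h2, if_pos h2]
    ring
  have hD2 : ∀ v ∈ uIcc v0 V,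
      HasDerivAt (fun v : ℝ => ((2+μ)^2*v^3/3 - μ^2*v^2/2)/4)
        (((2+μ)^2*v^2 - μ^2*v)/4) v := by
    intro v _
    have h3 : HasDerivAt (fun v : ℝ => (2+μ)^2*v^3/3) ((2+μ)^2*v^2) v :=
      (((hasDerivAt_pow 3 v).const_mul ((2+μ)^2)).div_const 3).congr_deriv (by ring)
    have h2' : HasDerivAt (fun v : ℝ => μ^2*v^2/2) (μ^2*v) v :=
      (((hasDerivAt_pow 2 v).const_mul (μ^2)).div_const 2).congr_deriv (by ring)
    exact ((h3.sub h2').div_const 4).congr_deriv (by ring)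
  have hC2 : IntervalIntegrable (fun v : ℝ => ((2+μ)^2*v^2 - μ^2*v)/4) volume v0 V := by
    apply ContinuousOn.intervalIntegrable
    fun_prop
  have V2 := integral_eq_sub_of_hasDerivAt hD2 hC2
  -- piece 3
  have E3 : ∫ v in V..1, Fq μ v
      = ∫ v in V..1, ((3+2*μ)*v - (3+μ) + 1/v) := by
    apply intervalIntegral.integral_congr_ae
    filter_upwards with v hv
    rw [uIoc_of_le hV1] at hv
    obtain ⟨h1, h2⟩ := hv
    have hvpos : (0:ℝ) < v := lt_trans hVpos h1
    have hnle1 : ¬ v ≤ v0 := by push_neg; linarith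
    have hnle2 : ¬ v ≤ V := not_le.2 h1
    rw [Fq, A, B, if_neg hnle1, if_neg hnle1, if_neg hnle2, if_neg hnle2]
    field_simp
    ring
  have hD3 : ∀ v ∈ uIcc V 1,
      HasDerivAt (fun v : ℝ => (3+2*μ)*v^2/2 - (3+μ)*v + Real.log v)
        ((3+2*μ)*v - (3+μ) + 1/v) v := by
    intro v hv
    rw [uIcc_of_le hV1] at hv
    obtain ⟨h1, h2⟩ := hv
    have hvpos : (0:ℝ) < v := lt_of_lt_of_le hVpos h1
    have hp : HasDerivAt (fun v : ℝ => (3+2*μ)*v^2/2 - (3+μ)*v)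
        ((3+2*μ)*v - (3+μ)) v :=
      ((((hasDerivAt_pow 2 v).const_mul ((3+2*μ))).div_const 2).sub
        ((hasDerivAt_id v).const_mul (3+μ))).congr_deriv (by ring)
    have := hp.add (Real.hasDerivAt_log hvpos.ne')
    refine this.congr_deriv ?_
    field_simp
  have hC3 : IntervalIntegrable (fun v : ℝ => (3+2*μ)*v - (3+μ) + 1/v) volume V 1 := by
    apply ContinuousOn.intervalIntegrable
    apply ContinuousOn.add (by fun_prop)
    apply ContinuousOn.div continuousOn_const continuousOn_id
    intro v hv
    rw [uIcc_of_le hV1] at hv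
    exact (lt_of_lt_of_le hVpos hv.1).ne'
  have V3 := integral_eq_sub_of_hasDerivAt hD3 hC3
  rw [hsplit, E1, V1, E2, V2, E3, V3, hsum1, Real.log_one]
  have hVne : V ≠ 0 := hVpos.ne'
  have hkne : (2+μ) ≠ 0 := hk.ne'
  have hv0V' : v0 = 1 - V := by linarith
  rw [hv0V', hVdef]
  field_simp
  simp only [sub_zero, Real.log_one]
  ring

end LBE

/-- Lower boundary estimate: for `0 ≤ μ ≤ 2` and any bivariate copula `C`,
`μ·ψ(C) + ξ(C)` is bounded below by the corresponding value of the family `C↘_μ`,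
with `v₁ = 2/(2+μ)`. -/
theorem lower_boundary_estimate (μ : ℝ) (hμ : μ ∈ Icc (0:ℝ) 2)
    (C : ℝ → ℝ → ℝ) (hC : IsCopula C) :
    μ * psi C + xi C ≥
      μ * (-2 * (2 / (2 + μ)) ^ 2 + 6 * (2 / (2 + μ)) - 5 + 1 / (2 / (2 + μ))) +
        (-4 * (2 / (2 + μ)) ^ 2 + 20 * (2 / (2 + μ)) - 17 + 2 / (2 / (2 + μ))
          - 1 / (2 / (2 + μ)) ^ 2 - 12 * Real.log (2 / (2 + μ))) := by
  obtain ⟨hμ0, hμ2⟩ := hμ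
  have hpsi : ∫ v in (0:ℝ)..1, C v v = ∫ v in (0:ℝ)..1, LBE.Cc C v v := by
    apply intervalIntegral.integral_congr_ae
    filter_upwards with v hv
    rw [Set.uIoc_of_le (by norm_num : (0:ℝ) ≤ 1)] at hv
    have hvm : v ∈ Icc (0:ℝ) 1 := ⟨hv.1.le, hv.2⟩
    rw [LBE.Cc, LBE.clamp_of_mem hvm]
  have h1ne : ∀ᵐ (t : ℝ), t ≠ 1 := by
    have : volume ({(1:ℝ)} : Set ℝ) = 0 := Real.volume_singleton
    exact MeasureTheory.compl_mem_ae_iff.2 this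
  have hinner : ∀ v ∈ Icc (0:ℝ) 1,
      (∫ t in (0:ℝ)..1, (d1 C t v)^2) = LBE.Iv C v := by
    intro v hv
    apply intervalIntegral.integral_congr_ae
    filter_upwards [h1ne] with t ht1 ht
    rw [Set.uIoc_of_le (by norm_num : (0:ℝ) ≤ 1)] at ht
    have htlt : t < 1 := lt_of_le_of_ne ht.2 ht1
    have heq : (fun s => C s v) =ᶠ[nhds t] (fun s => LBE.Cc C s v) := by
      filter_upwards [Ioo_mem_nhds ht.1 htlt] with s hs
      rw [LBE.Cc, LBE.clamp_of_mem ⟨hs.1.le, hs.2.le⟩, LBE.clamp_of_mem hv]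
    rw [d1, heq.deriv_eq]
  have houter : (∫ v in (0:ℝ)..1, ∫ t in (0:ℝ)..1, (d1 C t v)^2)
      = ∫ v in (0:ℝ)..1, LBE.Iv C v := by
    apply intervalIntegral.integral_congr_ae
    filter_upwards with v hv
    rw [Set.uIoc_of_le (by norm_num : (0:ℝ) ≤ 1)] at hv
    exact hinner v ⟨hv.1.le, hv.2⟩
  have hIntCc : IntervalIntegrable (fun v => LBE.Cc C v v) volume 0 1 :=
    ((LBE.Cc_cont hC).comp (continuous_id.prodMk continuous_id)).intervalIntegrable 0 1
  have hIntIv : IntervalIntegrable (LBE.Iv C) volume 0 1 := by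
    apply LBE.bdd_intervalIntegrable (LBE.Iv_measurable hC) (M := 1)
    intro v
    obtain ⟨h0, h1⟩ := LBE.Iv_mem hC v
    rw [abs_of_nonneg h0]; exact h1
  have hIntFq : IntervalIntegrable (LBE.Fq μ) volume 0 1 :=
    LBE.Fq_intervalIntegrable ⟨hμ0, hμ2⟩ (by norm_num) (by norm_num)
  have hmono : (∫ v in (0:ℝ)..1, LBE.Fq μ v)
      ≤ ∫ v in (0:ℝ)..1, (μ * LBE.Cc C v v + LBE.Iv C v) := by
    apply intervalIntegral.integral_mono_on (by norm_num : (0:ℝ) ≤ 1) hIntFq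
      ((hIntCc.const_mul μ).add hIntIv)
    intro v hv
    have := LBE.per_v hC ⟨hμ0, hμ2⟩ hv
    have hCc : C v v = LBE.Cc C v v := by
      rw [LBE.Cc, LBE.clamp_of_mem hv]
    rw [hCc] at this
    exact this
  have hadd : (∫ v in (0:ℝ)..1, (μ * LBE.Cc C v v + LBE.Iv C v))
      = μ * (∫ v in (0:ℝ)..1, LBE.Cc C v v) + ∫ v in (0:ℝ)..1, LBE.Iv C v := by
    rw [intervalIntegral.integral_add (hIntCc.const_mul μ) hIntIv,
      intervalIntegral.integral_const_mul]
  have hval := LBE.Fq_integral ⟨hμ0, hμ2⟩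
  rw [hval, hadd] at hmono
  rw [psi, xi, hpsi, houter]
  linarith
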